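/- Let D̄ be any real number with v(r−ρ²) ≤ D̄ ≤ vr, and set α* = −ρ/r + √((1−ρ²/r)(v/D̄ − 1/r)). Then D_P(α*, 0) = D̄, and for every α ∈ ℝ and every s ≥ 0 satisfying the privacy constraint D_P(α, s) ≥ D̄ one has D_C(α, s) ≥ D_C(α*, 0) = (α*)²·D̄. In other words, in the quadratic-Gaussian strategic communication problem the minimum distortion subject to the privacy constraint is achieved with zero added noise (s = 0) at the encoder Y = X + α*θ, and equals (α*)²·D̄. -/

import Mathlib

/-- `Q α = 1 + 2αρ + α²r`, the normalized second moment of `Y = X + αθ` (divided by `v`). -/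
noncomputable def Q (ρ r α : ℝ) : ℝ := 1 + 2 * α * ρ + α ^ 2 * r

/-- Distortion `D_C(α, s) = E(X − E[X|Y])²` for `Y = X + αθ + S`, `S ~ N(0, s)`. -/
noncomputable def DC (v ρ r α s : ℝ) : ℝ :=
  v * (1 - (1 + α * ρ) ^ 2 / (Q ρ r α + s / v))

/-- Privacy level `D_P(α, s) = E(θ − E[θ|Y])²` for `Y = X + αθ + S`, `S ~ N(0, s)`. -/
noncomputable def DP (v ρ r α s : ℝ) : ℝ :=
  v * (r - (ρ + r * α) ^ 2 / (Q ρ r α + s / v))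

lemma DP_eq' (v ρ r α y : ℝ) (h : Q ρ r α + y ≠ 0) :
    v * (r - (ρ + r * α) ^ 2 / (Q ρ r α + y)) = (v * (r - ρ ^ 2) + r * v * y) / (Q ρ r α + y) := by
  simp only [Q] at h ⊢
  rw [eq_div_iff h]
  rw [mul_sub, sub_mul, mul_div_assoc', div_mul_cancel₀ _ h]
  ring

lemma DC_eq' (v ρ r α y : ℝ) (h : Q ρ r α + y ≠ 0) :
    v * (1 - (1 + α * ρ) ^ 2 / (Q ρ r α + y))
      = (v * α ^ 2 * (r - ρ ^ 2) + v * y) / (Q ρ r α + y) := by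
  simp only [Q] at h ⊢
  rw [eq_div_iff h]
  rw [mul_sub, sub_mul, mul_div_assoc', div_mul_cancel₀ _ h]
  ring

lemma key_identity (v ρ r D α β t : ℝ) (hQβ : Q ρ r β * D = v * (r - ρ ^ 2)) :
    (ρ + β * r) * ((v * α ^ 2 * (r - ρ ^ 2) + v * t) - β ^ 2 * D * (Q ρ r α + t))
      = (-β) * (1 + β * ρ) * ((v * (r - ρ ^ 2) + r * v * t) - D * (Q ρ r α + t))
        + (1 + β * ρ) * (ρ + β * r) * (v * t)
        + D * ρ * (α - β) ^ 2 * Q ρ r β := by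
  simp only [Q] at *
  linear_combination (-((ρ + β * r) * α ^ 2 + β * (1 + β * ρ) + β * t)) * hQβ

set_option maxHeartbeats 1000000 in
/-- The minimum distortion subject to the privacy constraint `D_P ≥ D̄` is achieved with zero
added noise at the encoder `Y = X + α*θ`, with `α* = −ρ/r + √((1−ρ²/r)(v/D̄ − 1/r))`, and the
minimum distortion equals `(α*)² D̄`. -/
theorem simple_equilibrium (v ρ r D : ℝ) (hv : 0 < v) (hρ : 0 ≤ ρ) (hr : ρ ^ 2 < r)
    (hD1 : v * (r - ρ ^ 2) ≤ D) (hD2 : D ≤ v * r) :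
    DP v ρ r (-ρ / r + Real.sqrt ((1 - ρ ^ 2 / r) * (v / D - 1 / r))) 0 = D ∧
    DC v ρ r (-ρ / r + Real.sqrt ((1 - ρ ^ 2 / r) * (v / D - 1 / r))) 0 =
      (-ρ / r + Real.sqrt ((1 - ρ ^ 2 / r) * (v / D - 1 / r))) ^ 2 * D ∧
    ∀ α s : ℝ, 0 ≤ s → DP v ρ r α s ≥ D →
      DC v ρ r α s ≥ DC v ρ r (-ρ / r + Real.sqrt ((1 - ρ ^ 2 / r) * (v / D - 1 / r))) 0 := by
  have hr0 : 0 < r := lt_of_le_of_lt (sq_nonneg ρ) hr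
  have hrρ : 0 < r - ρ ^ 2 := by linarith
  have hD0 : 0 < D := lt_of_lt_of_le (by positivity) hD1
  set k := Real.sqrt ((1 - ρ ^ 2 / r) * (v / D - 1 / r)) with hkdef
  set β := -ρ / r + k with hβdef
  have hrad1 : 0 < 1 - ρ ^ 2 / r := by
    have : ρ ^ 2 / r < 1 := (div_lt_one hr0).mpr hr
    linarith
  have hrad2 : 0 ≤ v / D - 1 / r := by
    have : 1 / r ≤ v / D := by
      rw [div_le_div_iff₀ hr0 hD0]; linarith
    linarith
  have hk0 : 0 ≤ k := Real.sqrt_nonneg _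
  have hk2 : k ^ 2 = (1 - ρ ^ 2 / r) * (v / D - 1 / r) :=
    Real.sq_sqrt (mul_nonneg hrad1.le hrad2)
  have hQβexp : Q ρ r β = 1 - ρ ^ 2 / r + r * k ^ 2 := by
    simp only [Q, hβdef]
    field_simp
    ring
  have hQβ : Q ρ r β * D = v * (r - ρ ^ 2) := by
    rw [hQβexp, hk2]
    field_simp
    ring
  have hQβpos : 0 < Q ρ r β := by
    have h1 : 0 < Q ρ r β * D := by rw [hQβ]; positivity
    nlinarith
  -- bounds on β
  have hk2' : r ^ 2 * D * k ^ 2 = (r - ρ ^ 2) * (v * r - D) := by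
    rw [hk2]; field_simp
  have hρβr : ρ + β * r = r * k := by
    rw [hβdef]; field_simp; ring
  have hρβr0 : 0 ≤ ρ + β * r := by rw [hρβr]; exact mul_nonneg hr0.le hk0
  have h5 : r ^ 2 * D * k ^ 2 ≤ ρ ^ 2 * D := by nlinarith [hk2', hD1, hr0, hD0]
  have h6 : (r * k) ^ 2 ≤ ρ ^ 2 := by nlinarith [h5, hD0]
  have hrk : r * k ≤ ρ := by nlinarith [h6, hρ, mul_nonneg hr0.le hk0]
  have hβle : β ≤ 0 := by nlinarith [hρβr, hrk, hr0]
  have hβρ : 0 < 1 + β * ρ := by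
    nlinarith [mul_nonneg hρ hρβr0, hr, hr0]
  -- Part 1
  have h1 : DP v ρ r β 0 = D := by
    simp only [DP, zero_div, add_zero]
    rw [show v * (r - (ρ + r * β) ^ 2 / Q ρ r β)
          = v * (r - (ρ + r * β) ^ 2 / (Q ρ r β + 0)) from by rw [add_zero],
      DP_eq' v ρ r β 0 (by rw [add_zero]; exact hQβpos.ne'), add_zero, mul_zero, add_zero,
      div_eq_iff hQβpos.ne']
    linarith [hQβ]
  -- Part 2
  have h2 : DC v ρ r β 0 = β ^ 2 * D := by
    simp only [DC, zero_div, add_zero]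
    rw [show v * (1 - (1 + β * ρ) ^ 2 / Q ρ r β)
          = v * (1 - (1 + β * ρ) ^ 2 / (Q ρ r β + 0)) from by rw [add_zero],
      DC_eq' v ρ r β 0 (by rw [add_zero]; exact hQβpos.ne'), add_zero, mul_zero, add_zero,
      div_eq_iff hQβpos.ne']
    linear_combination (-β ^ 2) * hQβ
  refine ⟨h1, h2, ?_⟩
  intro α s hs hDP
  have hQα : 0 < Q ρ r α := by
    simp only [Q]; nlinarith [sq_nonneg (ρ + r * α), hr0, hr]
  have hT : 0 < Q ρ r α + s / v :=
    add_pos_of_pos_of_nonneg hQα (div_nonneg hs hv.le)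
  simp only [DP] at hDP
  rw [DP_eq' v ρ r α (s / v) hT.ne'] at hDP
  have hG : D * (Q ρ r α + s / v) ≤ v * (r - ρ ^ 2) + r * v * (s / v) :=
    (le_div_iff₀ hT).mp hDP
  rw [ge_iff_le, h2]
  simp only [DC]
  rw [DC_eq' v ρ r α (s / v) hT.ne', le_div_iff₀ hT]
  set t := s / v with htdef
  have ht0 : 0 ≤ t := div_nonneg hs hv.le
  -- goal : β ^ 2 * D * (Q ρ r α + t) ≤ v * α ^ 2 * (r - ρ ^ 2) + v * t
  rcases lt_or_eq_of_le hD2 with hlt | heq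
  · have hkpos : 0 < k := by
      rw [hkdef]
      apply Real.sqrt_pos.mpr
      apply mul_pos hrad1
      have : 1 / r < v / D := by rw [div_lt_div_iff₀ hr0 hD0]; linarith
      linarith
    have hρβrpos : 0 < ρ + β * r := by rw [hρβr]; positivity
    have hkey := key_identity v ρ r D α β t hQβ
    have t1 : 0 ≤ (-β) * (1 + β * ρ) * ((v * (r - ρ ^ 2) + r * v * t) - D * (Q ρ r α + t)) :=
      mul_nonneg (mul_nonneg (neg_nonneg.mpr hβle) hβρ.le) (by linarith)
    have t2 : 0 ≤ (1 + β * ρ) * (ρ + β * r) * (v * t) :=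
      mul_nonneg (mul_nonneg hβρ.le hρβr0) (by positivity)
    have t3 : 0 ≤ D * ρ * (α - β) ^ 2 * Q ρ r β := by positivity
    have hX : (ρ + β * r) * 0
        ≤ (ρ + β * r) * ((v * α ^ 2 * (r - ρ ^ 2) + v * t) - β ^ 2 * D * (Q ρ r α + t)) := by
      rw [mul_zero, hkey]; linarith
    have := le_of_mul_le_mul_left hX hρβrpos
    linarith
  · -- D = v * r
    have hα : ρ + r * α = 0 := by
      simp only [Q] at hG
      rw [heq] at hG
      have hsq' : v * (ρ + r * α) ^ 2 ≤ 0 := by nlinarith [hG]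
      have hsq : (ρ + r * α) ^ 2 ≤ 0 := by nlinarith [hsq', hv, sq_nonneg (ρ + r * α)]
      have h0 : (ρ + r * α) ^ 2 = 0 := le_antisymm hsq (sq_nonneg _)
      exact pow_eq_zero_iff two_ne_zero |>.mp h0
    have hk00 : k = 0 := by
      rw [hkdef, show v / D - 1 / r = 0 from by rw [heq]; field_simp; ring]
      simp
    have hβval : β = -ρ / r := by rw [hβdef, hk00, add_zero]
    have hβr : β * r = -ρ := by rw [hβval]; field_simp
    have hαval : α = β := by
      rw [hβval]; field_simp; linarith [hα]
    have hb2 : β ^ 2 * r ^ 2 = ρ ^ 2 := by linear_combination (β * r - ρ) * hβr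
    have hb3 : v * (β ^ 2 * r ^ 2) = v * ρ ^ 2 := by rw [hb2]
    have hvd : 0 ≤ v - β ^ 2 * D := by
      have h9 : v - (-ρ / r) ^ 2 * (v * r) = v * (r - ρ ^ 2) / r := by
        field_simp
      rw [hβval, heq, h9]
      positivity
    have hQβ2 : (1 + 2 * β * ρ + β ^ 2 * r) * D * β ^ 2 = v * (r - ρ ^ 2) * β ^ 2 := by
      simp only [Q] at hQβ
      linear_combination β ^ 2 * hQβ
    rw [hαval]
    simp only [Q]
    linarith [hQβ2, mul_nonneg ht0 hvd]
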